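/- Let n ≥ 2, α ∈ (-n, 0), and φ a Young function satisfying Λ̲_φ(α) < ∞, and let Ω ⊂ ℝⁿ be a bounded domain. Then every u ∈ C_c^1(Ω) has finite Orlicz-Besov seminorm ‖u‖_{Ḃ^{α,φ}(Ω)} < ∞. -/

import Mathlib

open MeasureTheory Set Filter
open scoped ENNReal NNReal Topology

noncomputable def Lunder (n : ℕ) (α : ℝ) (φ : ℝ → ℝ) : ℝ≥0∞ :=
  ⨆ x ∈ Set.Ioi (0:ℝ), ∫⁻ t in Set.Ioo (0:ℝ) 1,
    ENNReal.ofReal (φ (t ^ (1 - α) * x) / (φ x * t ^ (n + 1)))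

noncomputable def Lover (n : ℕ) (α : ℝ) (φ : ℝ → ℝ) : ℝ≥0∞ :=
  ⨆ x ∈ Set.Ioi (0:ℝ), ∫⁻ t in Set.Ioi (1:ℝ),
    ENNReal.ofReal (φ (t ^ (-α) * x) / (φ x * t ^ (n + 1)))

noncomputable def besovSet (n : ℕ) (α : ℝ) (φ : ℝ → ℝ)
    (Ω : Set (EuclideanSpace ℝ (Fin n))) (u : EuclideanSpace ℝ (Fin n) → ℝ) : Set ℝ :=
  {l : ℝ | 0 < l ∧
    (∫⁻ x in Ω, ∫⁻ y in Ω,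
      ENNReal.ofReal (φ (|u x - u y| / (l * ‖x - y‖ ^ α)) / ‖x - y‖ ^ (2 * n))) ≤ 1}

open Metric in
lemma polar_lintegral (n : ℕ) (hn : 1 ≤ n) {g : ℝ → ℝ≥0∞} (hg : Measurable g) :
    ∫⁻ x : EuclideanSpace ℝ (Fin n), g ‖x‖ =
      (volume : Measure (EuclideanSpace ℝ (Fin n))).toSphere univ *
        ∫⁻ r in Ioi (0:ℝ), ENNReal.ofReal (r ^ (n - 1)) * g r := by
  have hne : (0 : ℕ) < n := hn
  haveI : Nontrivial (EuclideanSpace ℝ (Fin n)) :=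
    ⟨EuclideanSpace.single ⟨0, hne⟩ 1, 0, by
      intro h
      have := congrArg (fun v : EuclideanSpace ℝ (Fin n) => v ⟨0, hne⟩) h
      simp [EuclideanSpace.single] at this⟩
  set E := EuclideanSpace ℝ (Fin n)
  set μ : Measure E := volume with hμ
  have hdim : Module.finrank ℝ E = n := finrank_euclideanSpace_fin
  have step1 : ∫⁻ x : E, g ‖x‖ ∂μ
      = ∫⁻ x : ({(0:EuclideanSpace ℝ (Fin n))}ᶜ : Set E), g ‖(x : E)‖ ∂(μ.comap (↑)) := by
    rw [lintegral_subtype_comap (measurableSet_singleton (0:EuclideanSpace ℝ (Fin n))).compl fun x ↦ g ‖x‖,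
      restrict_compl_singleton]
  have step2 : ∫⁻ x : ({(0:EuclideanSpace ℝ (Fin n))}ᶜ : Set E), g ‖(x : E)‖ ∂(μ.comap (↑))
      = ∫⁻ p : sphere (0:EuclideanSpace ℝ (Fin n)) 1 × Ioi (0:ℝ), g p.2
          ∂(μ.toSphere.prod (.volumeIoiPow (Module.finrank ℝ E - 1))) := by
    rw [← μ.measurePreserving_homeomorphUnitSphereProd.lintegral_comp
      (show Measurable fun p : sphere (0:EuclideanSpace ℝ (Fin n)) 1 × Ioi (0:ℝ) => g p.2 from
        hg.comp (measurable_subtype_coe.comp measurable_snd))]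
    simp [homeomorphUnitSphereProd]
  have step3 : ∫⁻ p : sphere (0:EuclideanSpace ℝ (Fin n)) 1 × Ioi (0:ℝ), g p.2
          ∂(μ.toSphere.prod (.volumeIoiPow (Module.finrank ℝ E - 1)))
      = μ.toSphere univ * ∫⁻ r : Ioi (0:ℝ), g r ∂(Measure.volumeIoiPow (n - 1)) := by
    rw [lintegral_prod _
      (show Measurable fun p : sphere (0:EuclideanSpace ℝ (Fin n)) 1 × Ioi (0:ℝ) => g p.2 from
        hg.comp (measurable_subtype_coe.comp measurable_snd)).aemeasurable, hdim]
    simp [lintegral_const, mul_comm]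
  have step4 : ∫⁻ r : Ioi (0:ℝ), g r ∂(Measure.volumeIoiPow (n - 1))
      = ∫⁻ r in Ioi (0:ℝ), ENNReal.ofReal (r ^ (n - 1)) * g r := by
    rw [Measure.volumeIoiPow,
      lintegral_withDensity_eq_lintegral_mul _
        ((measurable_subtype_coe.pow_const _).ennreal_ofReal)
        (show Measurable fun r : Ioi (0:ℝ) => g ↑r from hg.comp measurable_subtype_coe)]
    exact lintegral_subtype_comap measurableSet_Ioi fun r ↦ ENNReal.ofReal (r ^ (n - 1)) * g r
  rw [hμ] at step1 ⊢
  rw [step1, step2, step3, step4]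

set_option maxHeartbeats 2000000 in
theorem stmt9 (n : ℕ) (hn : 2 ≤ n) (α : ℝ) (hα1 : -(n : ℝ) < α) (hα2 : α < 0)
    (φ : ℝ → ℝ)
    (hconv : ConvexOn ℝ (Set.Ici 0) φ) (hcont : ContinuousOn φ (Set.Ici 0))
    (hzero : φ 0 = 0) (hpos : ∀ t > 0, 0 < φ t)
    (htop : Filter.Tendsto φ Filter.atTop Filter.atTop)
    (hL1 : Lunder n α φ < ⊤)
    (Ω : Set (EuclideanSpace ℝ (Fin n))) (hopen : IsOpen Ω) (hconn : IsConnected Ω)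
    (hbd : Bornology.IsBounded Ω)
    (u : EuclideanSpace ℝ (Fin n) → ℝ) (hu : ContDiff ℝ 1 u)
    (hsupp : HasCompactSupport u) (hsub : tsupport u ⊆ Ω) :
    (besovSet n α φ Ω u).Nonempty := by
  classical
  -- nonnegativity and monotonicity of φ
  have hnn : ∀ a : ℝ, 0 ≤ a → 0 ≤ φ a := by
    intro a ha
    rcases ha.eq_or_lt with h | h
    · simp [← h, hzero]
    · exact (hpos a h).le
  have hmono : ∀ a b : ℝ, 0 ≤ a → a ≤ b → φ a ≤ φ b := by
    intro s t hs hst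
    rcases hst.eq_or_lt with rfl | hst
    · exact le_rfl
    have ht : 0 < t := lt_of_le_of_lt hs hst
    rcases hs.eq_or_lt with rfl | hs0
    · simpa [hzero] using (hpos t ht).le
    · have hq : s / t ≤ 1 := (div_le_one ht).2 hst.le
      have h := hconv.2 (self_mem_Ici) (mem_Ici.2 ht.le)
        (show (0:ℝ) ≤ 1 - s / t by linarith)
        (show (0:ℝ) ≤ s / t by positivity)
        (by ring)
      have hsm : (1 - s / t) • (0:ℝ) + (s / t) • t = s := by
        field_simp
        rw [smul_zero, zero_add, smul_eq_mul, div_mul_cancel₀ s ht.ne']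
      rw [hsm] at h
      simp only [smul_eq_mul, hzero, mul_zero, zero_add] at h
      have hφt : 0 ≤ φ t := hnn t ht.le
      nlinarith [h, hq, hφt, mul_nonneg (sub_nonneg.2 hq) hφt]
  -- Lipschitz bound
  obtain ⟨C, hC⟩ := hu.lipschitzWith_of_hasCompactSupport hsupp one_ne_zero
  set L : ℝ := (C : ℝ) + 1 with hLdef
  have hLpos : 0 < L := by positivity
  have hlip : ∀ x y : EuclideanSpace ℝ (Fin n), |u x - u y| ≤ L * ‖x - y‖ := by
    intro x y
    have := hC.dist_le_mul x y
    rw [Real.dist_eq, dist_eq_norm] at this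
    nlinarith [norm_nonneg (x - y), this]
  -- diameter bound
  obtain ⟨ρ, hρ⟩ := (Metric.isBounded_iff_subset_closedBall (0:EuclideanSpace ℝ (Fin n))).1 hbd
  set D : ℝ := max (2 * ρ) 1 with hDdef
  have hD1 : 1 ≤ D := le_max_right _ _
  have hDpos : 0 < D := lt_of_lt_of_le one_pos hD1
  have hdiam : ∀ x ∈ Ω, ∀ y ∈ Ω, ‖x - y‖ ≤ D := by
    intro x hx y hy
    have hx' : ‖x‖ ≤ ρ := by simpa [Metric.mem_closedBall, dist_eq_norm] using hρ hx
    have hy' : ‖y‖ ≤ ρ := by simpa [Metric.mem_closedBall, dist_eq_norm] using hρ hy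
    calc ‖x - y‖ ≤ ‖x‖ + ‖y‖ := norm_sub_le x y
      _ ≤ 2 * ρ := by linarith
      _ ≤ D := le_max_left _ _
  -- continuous extension of φ
  set ψ : ℝ → ℝ := fun s => φ (max s 0) with hψdef
  have hψc : Continuous ψ :=
    hcont.comp_continuous (continuous_id.max continuous_const) fun s => mem_Ici.2 (le_max_right _ _)
  have hψ : ∀ s : ℝ, 0 ≤ s → ψ s = φ s := by
    intro s hs; simp [hψdef, max_eq_left hs]
  -- the constants
  set Csph : ℝ≥0∞ := (volume : Measure (EuclideanSpace ℝ (Fin n))).toSphere univ with hCsph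
  have hCsphlt : Csph < ⊤ := measure_lt_top _ _
  set S : ℝ≥0∞ := Lunder n α φ + volume (Icc (1:ℝ) D) with hSdef
  have hSlt : S < ⊤ := by
    refine ENNReal.add_lt_top.2 ⟨hL1, ?_⟩
    rw [Real.volume_Icc]; exact ENNReal.ofReal_lt_top
  set K : ℝ≥0∞ := volume Ω * (Csph * S) with hKdef
  have hΩlt : volume Ω < ⊤ :=
    lt_of_le_of_lt (measure_mono hρ) measure_closedBall_lt_top
  have hKlt : K < ⊤ := ENNReal.mul_lt_top hΩlt (ENNReal.mul_lt_top hCsphlt hSlt)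
  set δ : ℝ := (K.toReal + 1)⁻¹ with hδdef
  have hδpos : 0 < δ := by positivity
  have hKδ : K * ENNReal.ofReal δ ≤ 1 := by
    conv_lhs => rw [← ENNReal.ofReal_toReal hKlt.ne]
    rw [← ENNReal.ofReal_mul ENNReal.toReal_nonneg]
    refine ENNReal.ofReal_le_one.2 ?_
    rw [hδdef]
    rw [mul_inv_le_iff₀ (by positivity)]
    linarith [ENNReal.toReal_nonneg (a := K)]
  -- pick s0 > 0 with φ s0 < δ
  have h0 : ContinuousWithinAt φ (Ici (0:ℝ)) 0 := hcont 0 self_mem_Ici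
  have h1 : Tendsto φ (𝓝[>] (0:ℝ)) (𝓝 0) := by
    have := h0.tendsto.mono_left (nhdsWithin_mono 0 Ioi_subset_Ici_self)
    simpa [hzero] using this
  obtain ⟨s0, hs0δ, hs0pos⟩ :=
    ((h1.eventually_lt_const hδpos).and self_mem_nhdsWithin).exists
  have hs0pos : (0:ℝ) < s0 := hs0pos
  -- choose λ
  have hexp : (0:ℝ) ≤ 1 - α := by linarith
  have hD1α : (1:ℝ) ≤ D ^ (1 - α) := by
    calc (1:ℝ) = 1 ^ (1 - α) := (Real.one_rpow _).symm
      _ ≤ D ^ (1 - α) := Real.rpow_le_rpow zero_le_one hD1 hexp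
  have hDα_pos : (0:ℝ) < D ^ (1 - α) := lt_of_lt_of_le one_pos hD1α
  set l : ℝ := D ^ (1 - α) * L / s0 with hldef
  have hl : 0 < l := by positivity
  set X : ℝ := s0 / D ^ (1 - α) with hXdef
  have hX : 0 < X := by positivity
  have hXl : X * l = L := by
    rw [hXdef, hldef]; field_simp
  have hDX : D ^ (1 - α) * X = s0 := by
    rw [hXdef]; field_simp
  have hφX : φ X ≤ δ := by
    refine le_trans (hmono X s0 hX.le ?_) hs0δ.le
    rw [hXdef]
    exact div_le_self hs0pos.le hD1α
  have hφDX : φ (D ^ (1 - α) * X) ≤ δ := by rw [hDX]; exact hs0δ.le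
  -- the dominating radial function
  set g : ℝ → ℝ≥0∞ := fun r =>
    (Ioc (0:ℝ) D).indicator
      (fun r => ENNReal.ofReal (ψ (r ^ (1 - α) * X) / r ^ (2 * n))) r with hgdef
  have hgmeas : Measurable g := by
    refine Measurable.indicator ?_ measurableSet_Ioc
    refine Measurable.ennreal_ofReal (Measurable.div ?_ (measurable_id.pow_const _))
    exact hψc.measurable.comp (by fun_prop)
  -- pointwise bound
  have hpt : ∀ x ∈ Ω, ∀ y ∈ Ω,
      ENNReal.ofReal (φ (|u x - u y| / (l * ‖x - y‖ ^ α)) / ‖x - y‖ ^ (2 * n))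
        ≤ g ‖x - y‖ := by
    intro x hx y hy
    rcases eq_or_ne x y with rfl | hxy
    · simp [sub_self, hzero, Real.zero_rpow hα2.ne, abs_zero]
    · set r : ℝ := ‖x - y‖ with hrdef
      have hr : 0 < r := by
        rw [hrdef]; exact norm_sub_pos_iff.2 hxy
      have hrD : r ≤ D := hdiam x hx y hy
      have hrr : r ^ (1 - α) * r ^ α = r := by
        rw [← Real.rpow_add hr]; norm_num
      have harg : |u x - u y| / (l * r ^ α) ≤ r ^ (1 - α) * X := by
        have hrα : 0 < r ^ α := Real.rpow_pos_of_pos hr α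
        rw [div_le_iff₀ (by positivity)]
        calc |u x - u y| ≤ L * r := hlip x y
          _ = (X * l) * (r ^ (1 - α) * r ^ α) := by rw [hXl, hrr]
          _ = r ^ (1 - α) * X * (l * r ^ α) := by ring
      have hφarg : φ (|u x - u y| / (l * r ^ α)) ≤ ψ (r ^ (1 - α) * X) := by
        rw [hψ _ (by positivity)]
        exact hmono _ _ (by positivity) harg
      have : φ (|u x - u y| / (l * r ^ α)) / r ^ (2 * n)
          ≤ ψ (r ^ (1 - α) * X) / r ^ (2 * n) := by
        gcongr
      have hg_eq : g ‖x - y‖ = ENNReal.ofReal (ψ (r ^ (1 - α) * X) / r ^ (2 * n)) := by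
        simp only [hgdef, Set.indicator_apply]
        rw [if_pos (show r ∈ Ioc (0:ℝ) D from ⟨hr, hrD⟩)]
      rw [hg_eq]
      exact ENNReal.ofReal_le_ofReal this
  -- polar integral bound
  set R : ℝ≥0∞ := ∫⁻ r in Ioi (0:ℝ), ENNReal.ofReal (r ^ (n - 1)) * g r with hRdef
  have hinner : ∀ x ∈ Ω,
      (∫⁻ y in Ω,
        ENNReal.ofReal (φ (|u x - u y| / (l * ‖x - y‖ ^ α)) / ‖x - y‖ ^ (2 * n)))
        ≤ Csph * R := by
    intro x hx
    have m1 : Measurable fun y : EuclideanSpace ℝ (Fin n) => g ‖x - y‖ :=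
      hgmeas.comp ((measurable_const.sub measurable_id).norm)
    calc (∫⁻ y in Ω, ENNReal.ofReal
            (φ (|u x - u y| / (l * ‖x - y‖ ^ α)) / ‖x - y‖ ^ (2 * n)))
        ≤ ∫⁻ y in Ω, g ‖x - y‖ := setLIntegral_mono m1 fun y hy => hpt x hx y hy
      _ ≤ ∫⁻ y, g ‖x - y‖ := setLIntegral_le_lintegral _ _
      _ = ∫⁻ y, g ‖y - x‖ := by simp_rw [norm_sub_rev x]
      _ = ∫⁻ z : EuclideanSpace ℝ (Fin n), g ‖z‖ := lintegral_sub_right_eq_self (fun z : EuclideanSpace ℝ (Fin n) => g ‖z‖) x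
      _ = Csph * R := polar_lintegral n (by omega) hgmeas
  -- estimate R
  have hRbound : R ≤ ENNReal.ofReal δ * S := by
    have e0 : R = ∫⁻ r in Ioc (0:ℝ) D,
        ENNReal.ofReal (ψ (r ^ (1 - α) * X) / r ^ (n + 1)) := by
      rw [hRdef]
      have : ∀ r : ℝ, ENNReal.ofReal (r ^ (n - 1)) * g r
          = (Ioc (0:ℝ) D).indicator
              (fun r => ENNReal.ofReal (r ^ (n - 1))
                * ENNReal.ofReal (ψ (r ^ (1 - α) * X) / r ^ (2 * n))) r := by
        intro r
        by_cases h : r ∈ Ioc (0:ℝ) D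
        · rw [hgdef]; simp [Set.indicator_of_mem h]
        · rw [hgdef]; simp [Set.indicator_of_notMem h]
      rw [lintegral_congr fun r => this r, lintegral_indicator measurableSet_Ioc,
        Measure.restrict_restrict measurableSet_Ioc,
        inter_eq_left.2 Ioc_subset_Ioi_self]
      refine setLIntegral_congr_fun measurableSet_Ioc (fun r hr => ?_)
      have hr0 : 0 < r := hr.1
      rw [← ENNReal.ofReal_mul (by positivity)]
      congr 1
      have h2n : (r:ℝ) ^ (2 * n) = r ^ (n - 1) * r ^ (n + 1) := by
        rw [← pow_add]; congr 1; omega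
      rw [h2n]
      field_simp
    have hsplit : Ioc (0:ℝ) D ⊆ Ioo (0:ℝ) 1 ∪ Icc (1:ℝ) D := by
      intro r hr
      by_cases h : r < 1
      · exact Or.inl ⟨hr.1, h⟩
      · exact Or.inr ⟨not_lt.1 h, hr.2⟩
    have part1 : (∫⁻ r in Ioo (0:ℝ) 1,
        ENNReal.ofReal (ψ (r ^ (1 - α) * X) / r ^ (n + 1)))
          ≤ ENNReal.ofReal δ * Lunder n α φ := by
      have e1 : ∀ r ∈ Ioo (0:ℝ) 1,
          ENNReal.ofReal (ψ (r ^ (1 - α) * X) / r ^ (n + 1))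
            = ENNReal.ofReal (φ X)
              * ENNReal.ofReal (φ (r ^ (1 - α) * X) / (φ X * r ^ (n + 1))) := by
        intro r hr
        have hr0 : 0 < r := hr.1
        have hφXpos : 0 < φ X := hpos X hX
        rw [hψ _ (by positivity), ← ENNReal.ofReal_mul (hnn X hX.le)]
        congr 1
        field_simp
      calc (∫⁻ r in Ioo (0:ℝ) 1, ENNReal.ofReal (ψ (r ^ (1 - α) * X) / r ^ (n + 1)))
          = ∫⁻ r in Ioo (0:ℝ) 1, ENNReal.ofReal (φ X)
              * ENNReal.ofReal (φ (r ^ (1 - α) * X) / (φ X * r ^ (n + 1))) :=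
            setLIntegral_congr_fun measurableSet_Ioo e1
        _ = ENNReal.ofReal (φ X)
              * ∫⁻ r in Ioo (0:ℝ) 1,
                  ENNReal.ofReal (φ (r ^ (1 - α) * X) / (φ X * r ^ (n + 1))) :=
            lintegral_const_mul' _ _ ENNReal.ofReal_ne_top
        _ ≤ ENNReal.ofReal δ * Lunder n α φ := by
            refine mul_le_mul' (ENNReal.ofReal_le_ofReal hφX) ?_
            exact le_biSup
              (f := fun x => ∫⁻ t in Ioo (0:ℝ) 1,
                ENNReal.ofReal (φ (t ^ (1 - α) * x) / (φ x * t ^ (n + 1))))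
              (mem_Ioi.2 hX)
    have part2 : (∫⁻ r in Icc (1:ℝ) D,
        ENNReal.ofReal (ψ (r ^ (1 - α) * X) / r ^ (n + 1)))
          ≤ ENNReal.ofReal δ * volume (Icc (1:ℝ) D) := by
      have hb : ∀ r ∈ Icc (1:ℝ) D,
          ENNReal.ofReal (ψ (r ^ (1 - α) * X) / r ^ (n + 1)) ≤ ENNReal.ofReal δ := by
        intro r hr
        have hr1 : (1:ℝ) ≤ r := hr.1
        have hr0 : (0:ℝ) < r := lt_of_lt_of_le one_pos hr1
        refine ENNReal.ofReal_le_ofReal ?_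
        have hψr : ψ (r ^ (1 - α) * X) = φ (r ^ (1 - α) * X) := hψ _ (by positivity)
        have hmr : φ (r ^ (1 - α) * X) ≤ φ (D ^ (1 - α) * X) := by
          refine hmono _ _ (by positivity) ?_
          have : r ^ (1 - α) ≤ D ^ (1 - α) := Real.rpow_le_rpow hr0.le hr.2 hexp
          exact mul_le_mul_of_nonneg_right this hX.le
        have hden : (1:ℝ) ≤ r ^ (n + 1) := one_le_pow₀ hr1
        calc ψ (r ^ (1 - α) * X) / r ^ (n + 1)
            ≤ ψ (r ^ (1 - α) * X) := by
              rw [hψr]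
              exact div_le_self (hnn _ (by positivity)) hden
          _ = φ (r ^ (1 - α) * X) := hψr
          _ ≤ φ (D ^ (1 - α) * X) := hmr
          _ ≤ δ := hφDX
      calc (∫⁻ r in Icc (1:ℝ) D, ENNReal.ofReal (ψ (r ^ (1 - α) * X) / r ^ (n + 1)))
          ≤ ∫⁻ _ in Icc (1:ℝ) D, ENNReal.ofReal δ := setLIntegral_mono measurable_const hb
        _ = ENNReal.ofReal δ * volume (Icc (1:ℝ) D) := setLIntegral_const _ _
    calc R = ∫⁻ r in Ioc (0:ℝ) D,
          ENNReal.ofReal (ψ (r ^ (1 - α) * X) / r ^ (n + 1)) := e0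
      _ ≤ ∫⁻ r in Ioo (0:ℝ) 1 ∪ Icc (1:ℝ) D,
          ENNReal.ofReal (ψ (r ^ (1 - α) * X) / r ^ (n + 1)) :=
          lintegral_mono_set hsplit
      _ ≤ (∫⁻ r in Ioo (0:ℝ) 1,
            ENNReal.ofReal (ψ (r ^ (1 - α) * X) / r ^ (n + 1)))
          + ∫⁻ r in Icc (1:ℝ) D,
            ENNReal.ofReal (ψ (r ^ (1 - α) * X) / r ^ (n + 1)) :=
          lintegral_union_le _ _ _
      _ ≤ ENNReal.ofReal δ * Lunder n α φ + ENNReal.ofReal δ * volume (Icc (1:ℝ) D) :=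
          add_le_add part1 part2
      _ = ENNReal.ofReal δ * S := by rw [hSdef, mul_add]
  -- conclude
  refine ⟨l, hl, ?_⟩
  calc (∫⁻ x in Ω, ∫⁻ y in Ω,
        ENNReal.ofReal (φ (|u x - u y| / (l * ‖x - y‖ ^ α)) / ‖x - y‖ ^ (2 * n)))
      ≤ ∫⁻ _ in Ω, Csph * R := setLIntegral_mono measurable_const hinner
    _ = Csph * R * volume Ω := setLIntegral_const _ _
    _ ≤ Csph * (ENNReal.ofReal δ * S) * volume Ω := by gcongr
    _ = K * ENNReal.ofReal δ := by rw [hKdef]; ring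
    _ ≤ 1 := hKδ
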